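/- Let X be a real Hilbert space, let u₁,…,u_N ∈ X \ {0} and α₁,…,α_N ∈ ℝ, and suppose the intersection H := ⋂_{i=1}^N H(u_i, α_i) of the hyperplanes is nonempty. Fix x ∈ X and define h : ℝ^N → ℝ by h(t) = ½‖x − Σ_{i=1}^N t_i u_i‖² + Σ_{i=1}^N t_i α_i. If t̃ ∈ ℝ^N is a global minimizer of h, then the metric projection of x onto H is P_H(x) = x − Σ_{i=1}^N t̃_i u_i. -/
import Mathlib


open RealInnerProductSpace

/-- Projection onto a nonempty intersection of hyperplanes via minimization:
if `t̃` is a global minimizer of `h(t) = ½‖x − Σ tᵢ uᵢ‖² + Σ tᵢ αᵢ`, then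
`P_H(x) = x − Σ t̃ᵢ uᵢ`, where `H = ⋂ᵢ H(uᵢ,αᵢ)`. -/
theorem metric_projection_intersection_hyperplanes
    {X : Type*} [NormedAddCommGroup X] [InnerProductSpace ℝ X] [CompleteSpace X]
    {N : ℕ} (u : Fin N → X) (hu : ∀ i, u i ≠ 0) (α : Fin N → ℝ)
    (H : Set X) (hH : H = ⋂ i, {z : X | ⟪u i, z⟫ = α i}) (hHne : H.Nonempty)
    (x : X) (h : (Fin N → ℝ) → ℝ)
    (hdef : ∀ t : Fin N → ℝ,
      h t = (1 / 2) * ‖x - ∑ i, t i • u i‖ ^ 2 + ∑ i, t i * α i)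
    (ttilde : Fin N → ℝ) (hmin : ∀ t : Fin N → ℝ, h ttilde ≤ h t) :
    (x - ∑ i, ttilde i • u i) ∈ H ∧
      ∀ z ∈ H, ‖x - (x - ∑ i, ttilde i • u i)‖ ≤ ‖x - z‖ := by
  set S : X := ∑ i, ttilde i • u i with hS
  set y : X := x - S with hy
  -- first-order optimality: ⟪u i, y⟫ = α i for all i
  have hmem : ∀ i, ⟪u i, y⟫ = α i := by
    intro i
    set c : ℝ := α i - ⟪u i, y⟫ with hc
    set d : ℝ := ‖u i‖ ^ 2 / 2 with hd
    have hd0 : 0 ≤ d := by positivity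
    have key : ∀ s : ℝ, 0 ≤ s * c + s ^ 2 * d := by
      intro s
      have := hmin (fun j => ttilde j + if j = i then s else 0)
      rw [hdef, hdef] at this
      have hsum1 : ∑ j, (ttilde j + if j = i then s else 0) • u j
          = S + s • u i := by
        rw [hS]
        simp [add_smul, Finset.sum_add_distrib, ite_smul, Finset.sum_ite_eq']
      have hsum2 : ∑ j, (ttilde j + if j = i then s else 0) * α j
          = (∑ j, ttilde j * α j) + s * α i := by
        simp [add_mul, Finset.sum_add_distrib, ite_mul]
      rw [hsum1, hsum2] at this
      have hexp : ‖x - (S + s • u i)‖ ^ 2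
          = ‖y‖ ^ 2 - 2 * (s * ⟪u i, y⟫) + s ^ 2 * ‖u i‖ ^ 2 := by
        have : x - (S + s • u i) = y - s • u i := by rw [hy]; abel
        rw [this, @norm_sub_sq_real, real_inner_smul_right, real_inner_comm,
          norm_smul]
        simp [mul_pow]
      rw [hexp] at this
      simp only [hc, hd]
      nlinarith [this]
    have hpos : (0:ℝ) < 2 * d + 1 := by linarith
    set s : ℝ := -c / (2 * d + 1) with hsdef
    have hs : s * (2 * d + 1) = -c := by
      rw [hsdef]; field_simp
    have h1 := key s
    have hc0 : c = 0 := by nlinarith [h1, hs, sq_nonneg c, mul_pos hpos hpos]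
    have : α i - ⟪u i, y⟫ = 0 := by rw [← hc, hc0]
    linarith
  have hyH : y ∈ H := by
    rw [hH]
    exact Set.mem_iInter.2 fun i => hmem i
  refine ⟨hyH, fun z hz => ?_⟩
  have hzH : ∀ i, ⟪u i, z⟫ = α i := by
    rw [hH] at hz
    exact fun i => Set.mem_iInter.1 hz i
  have horth : ⟪x - y, y - z⟫ = 0 := by
    have : x - y = S := by rw [hy]; abel
    rw [this, hS, sum_inner]
    apply Finset.sum_eq_zero
    intro i _
    rw [real_inner_smul_left, inner_sub_right, hmem i, hzH i]
    ring
  have hsq : ‖x - y‖ ^ 2 ≤ ‖x - z‖ ^ 2 := by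
    have : x - z = (x - y) + (y - z) := by abel
    rw [this, @norm_add_sq_real, horth]
    nlinarith [sq_nonneg ‖y - z‖]
  have := norm_nonneg (x - y)
  have := norm_nonneg (x - z)
  nlinarith [hsq]
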